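/- arXiv:1305.5669 — 6 statements merged into one kernel-verified Lean document; each statement's English description precedes it below -/
import Mathlib

section
/- For every natural number m and every real θ with cos θ ≠ 0 and sin θ ≠ 0, S_{2m}(−1, 1, −5, 2; cos θ) = (−1)^m · sin((2m+2)θ) / ((2m+2) · cos θ · sin θ). -/
open Finset Real MeasureTheory

/-- The basic class of symmetric orthogonal polynomials `S_n(p,q,r,s;x)`. -/
noncomputable def S (p q r s : ℝ) (n : ℕ) (x : ℝ) : ℝ :=
  ∑ k ∈ Finset.range (n / 2 + 1),
    (Nat.choose (n / 2) k : ℝ) *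
      (∏ i ∈ Finset.range (n / 2 - k),
        ((2 * (i : ℝ) + (-1 : ℝ) ^ (n + 1) + 2 * ((n / 2 : ℕ) : ℝ)) * p + r) /
        ((2 * (i : ℝ) + (-1 : ℝ) ^ (n + 1) + 2) * q + s)) *
      x ^ (n - 2 * k)

/-- The monic normalization `S̄_n(p,q,r,s;x)`. -/
noncomputable def Sbar (p q r s : ℝ) (n : ℕ) (x : ℝ) : ℝ :=
  (∏ i ∈ Finset.range (n / 2),
    ((2 * (i : ℝ) + (-1 : ℝ) ^ (n + 1) + 2) * q + s) /
    ((2 * (i : ℝ) + (-1 : ℝ) ^ (n + 1) + 2 * ((n / 2 : ℕ) : ℝ)) * p + r)) *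
    S p q r s n x

noncomputable def cc (m j : ℕ) : ℝ :=
  if j ≤ m then (-4 : ℝ) ^ j * (Nat.factorial (m + j + 1)) /
      ((Nat.factorial (m - j)) * (Nat.factorial (2 * j + 1))) else 0

lemma cc_of_le {m j : ℕ} (h : j ≤ m) :
    cc m j = (-4 : ℝ) ^ j * (Nat.factorial (m + j + 1)) /
      ((Nat.factorial (m - j)) * (Nat.factorial (2 * j + 1))) := if_pos h

lemma cc_of_gt {m j : ℕ} (h : m < j) : cc m j = 0 := if_neg (by omega)

lemma cc_zero (m : ℕ) : cc m 0 = (m : ℝ) + 1 := by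
  rw [cc_of_le (Nat.zero_le m)]
  norm_num [Nat.factorial_succ]
  rw [mul_div_assoc, div_self (by positivity), mul_one]

lemma prodS (m n : ℕ) :
    ∏ i ∈ Finset.range n, ((-2 : ℝ) * ((i : ℝ) + m + 2)) / (2 * (i : ℝ) + 3) =
      (-4 : ℝ) ^ n * (Nat.factorial (m + n + 1)) * (Nat.factorial n) /
        ((Nat.factorial (m + 1)) * (Nat.factorial (2 * n + 1))) := by
  induction n with
  | zero => simp; rw [div_self (by positivity)]
  | succ n ih =>
      rw [Finset.prod_range_succ, ih]
      rw [show m + (n + 1) + 1 = (m + n + 1) + 1 by ring,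
        show 2 * (n + 1) + 1 = (2 * n + 1) + 1 + 1 by ring,
        Nat.factorial_succ (m + n + 1), Nat.factorial_succ ((2 * n + 1) + 1),
        Nat.factorial_succ (2 * n + 1), Nat.factorial_succ n]
      have h1 : ((Nat.factorial (m + 1) : ℝ)) ≠ 0 := by positivity
      have h2 : ((Nat.factorial (2 * n + 1) : ℝ)) ≠ 0 := by positivity
      have h3 : (2 * (n : ℝ) + 3) ≠ 0 := by positivity
      field_simp
      push_cast
      ring

lemma crec (m j : ℕ) :
    cc (m + 2) j = 2 * cc (m + 1) j -
      (if j = 0 then 0 else 4 * cc (m + 1) (j - 1)) - cc m j := by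
  rcases Nat.eq_zero_or_eq_succ_pred j with h0 | hsucc
  · subst h0
    simp only [if_pos rfl, cc_zero]
    push_cast; ring
  · obtain ⟨i, rfl⟩ : ∃ i, j = i + 1 := ⟨j - 1, hsucc⟩
    simp only [Nat.add_sub_cancel, if_neg (Nat.succ_ne_zero i)]
    rcases lt_trichotomy (i + 1) (m + 1) with hlt | heq | hgt
    · -- 1 ≤ j ≤ m
      obtain ⟨b, rfl⟩ : ∃ b, m = i + 1 + b := ⟨m - (i + 1), by omega⟩
      rw [cc_of_le (by omega : i + 1 ≤ i + 1 + b + 2),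
          cc_of_le (by omega : i + 1 ≤ i + 1 + b + 1),
          cc_of_le (by omega : i ≤ i + 1 + b + 1),
          cc_of_le (by omega : i + 1 ≤ i + 1 + b)]
      rw [show i + 1 + b + 2 + (i + 1) + 1 = 2 * i + b + 5 by ring,
          show i + 1 + b + 2 - (i + 1) = b + 2 by omega,
          show i + 1 + b + 1 + (i + 1) + 1 = 2 * i + b + 4 by ring,
          show i + 1 + b + 1 - (i + 1) = b + 1 by omega,
          show i + 1 + b + 1 + i + 1 = 2 * i + b + 3 by ring,
          show i + 1 + b + 1 - i = b + 2 by omega,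
          show i + 1 + b + (i + 1) + 1 = 2 * i + b + 3 by ring,
          show i + 1 + b - (i + 1) = b by omega,
          show 2 * (i + 1) + 1 = 2 * i + 1 + 1 + 1 by ring]
      rw [show 2 * i + b + 5 = (2 * i + b + 4) + 1 by ring, Nat.factorial_succ (2 * i + b + 4),
          show 2 * i + b + 4 = (2 * i + b + 3) + 1 by ring, Nat.factorial_succ (2 * i + b + 3),
          Nat.factorial_succ (b + 1), Nat.factorial_succ b,
          Nat.factorial_succ (2 * i + 1 + 1), Nat.factorial_succ (2 * i + 1)]
      have h1 : ((Nat.factorial (2 * i + b + 3) : ℝ)) ≠ 0 := by positivity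
      have h2 : ((Nat.factorial b : ℝ)) ≠ 0 := by positivity
      have h3 : ((Nat.factorial (2 * i + 1) : ℝ)) ≠ 0 := by positivity
      field_simp
      push_cast
      ring
    · -- j = m + 1
      obtain rfl : m = i := by omega
      rw [cc_of_le (by omega : m + 1 ≤ m + 2), cc_of_le (by omega : m + 1 ≤ m + 1),
          cc_of_le (by omega : m ≤ m + 1), cc_of_gt (by omega : m < m + 1)]
      rw [show m + 2 + (m + 1) + 1 = 2 * m + 4 by ring,
          show m + 2 - (m + 1) = 1 by omega,
          show m + 1 + (m + 1) + 1 = 2 * m + 3 by ring,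
          show m + 1 - (m + 1) = 0 by omega,
          show m + 1 + m + 1 = 2 * m + 2 by ring,
          show m + 1 - m = 1 by omega,
          show 2 * (m + 1) + 1 = 2 * m + 3 by ring]
      rw [show 2 * m + 4 = (2 * m + 3) + 1 by ring, Nat.factorial_succ (2 * m + 3),
          show 2 * m + 3 = (2 * m + 2) + 1 by ring, Nat.factorial_succ (2 * m + 2),
          show 2 * m + 2 = (2 * m + 1) + 1 by ring, Nat.factorial_succ (2 * m + 1)]
      have h3 : ((Nat.factorial (2 * m + 1) : ℝ)) ≠ 0 := by positivity
      simp only [Nat.factorial_zero, Nat.factorial_one]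
      field_simp
      push_cast
      ring
    · rcases lt_trichotomy (i + 1) (m + 3) with hlt2 | heq2 | hgt2
      · -- j = m + 2
        obtain rfl : i = m + 1 := by omega
        rw [cc_of_le (le_refl (m + 2)), cc_of_gt (by omega : m + 1 < m + 2),
            cc_of_le (le_refl (m + 1)), cc_of_gt (by omega : m < m + 2)]
        rw [show m + 2 + (m + 2) + 1 = 2 * m + 5 by ring,
            show m + 2 - (m + 2) = 0 by omega,
            show 2 * (m + 2) + 1 = 2 * m + 5 by ring,
            show m + 1 + (m + 1) + 1 = 2 * m + 3 by ring,
            show m + 1 - (m + 1) = 0 by omega,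
            show 2 * (m + 1) + 1 = 2 * m + 3 by ring]
        have h1 : ((Nat.factorial (2 * m + 5) : ℝ)) ≠ 0 := by positivity
        have h2 : ((Nat.factorial (2 * m + 3) : ℝ)) ≠ 0 := by positivity
        simp only [Nat.factorial_zero]
        field_simp
        ring
      · -- j = m + 3 : all zero
        rw [cc_of_gt (by omega), cc_of_gt (by omega), cc_of_gt (by omega),
            cc_of_gt (by omega)]
        ring
      · rw [cc_of_gt (by omega), cc_of_gt (by omega), cc_of_gt (by omega),
            cc_of_gt (by omega)]
        ring

lemma S_eval (m : ℕ) (x : ℝ) :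
    ((m : ℝ) + 1) * S (-1) 1 (-5) 2 (2 * m) x =
      ∑ j ∈ Finset.range (m + 1), cc m j * x ^ (2 * j) := by
  have hdiv : 2 * m / 2 = m := Nat.mul_div_cancel_left m two_pos
  have hpow : (-1 : ℝ) ^ (2 * m + 1) = -1 := by
    rw [pow_succ, pow_mul]; norm_num
  rw [← Finset.sum_range_reflect (fun j => cc m j * x ^ (2 * j)) (m + 1)]
  unfold S
  rw [hdiv, Finset.mul_sum]
  refine Finset.sum_congr rfl fun k hk => ?_
  rw [Finset.mem_range] at hk
  have hk' : k ≤ m := by omega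
  have hprod : (∏ i ∈ Finset.range (m - k),
      ((2 * (i : ℝ) + (-1 : ℝ) ^ (2 * m + 1) + 2 * (m : ℝ)) * (-1) + (-5)) /
      ((2 * (i : ℝ) + (-1 : ℝ) ^ (2 * m + 1) + 2) * 1 + 2)) =
      ∏ i ∈ Finset.range (m - k), ((-2 : ℝ) * ((i : ℝ) + m + 2)) / (2 * (i : ℝ) + 3) := by
    refine Finset.prod_congr rfl fun i _ => ?_
    rw [hpow]; ring_nf
  rw [hprod, prodS m (m - k)]
  obtain ⟨a, rfl⟩ : ∃ a, m = k + a := ⟨m - k, by omega⟩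
  rw [show k + a - k = a by omega, show 2 * (k + a) - 2 * k = 2 * a by omega,
      show k + a + 1 - 1 - k = a by omega,
      cc_of_le (by omega : a ≤ k + a),
      show k + a + a + 1 = k + (a + a + 1) by ring,
      show k + a - a = k by omega]
  have hch : ((Nat.choose (k + a) k : ℝ)) * (Nat.factorial k) * (Nat.factorial a) =
      (Nat.factorial (k + a)) := by
    have h := Nat.choose_mul_factorial_mul_factorial (Nat.le_add_right k a)
    rw [Nat.add_sub_cancel_left] at h
    exact_mod_cast h
  rw [Nat.factorial_succ (k + a)]
  have h1 : ((Nat.factorial (k + a) : ℝ)) ≠ 0 := by positivity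
  have h2 : ((Nat.factorial k : ℝ)) ≠ 0 := by positivity
  have h3 : ((Nat.factorial a : ℝ)) ≠ 0 := by positivity
  have h4 : ((Nat.factorial (2 * a + 1) : ℝ)) ≠ 0 := by positivity
  have h5 : ((k : ℝ) + a + 1) ≠ 0 := by positivity
  field_simp
  push_cast
  linear_combination (((k:ℝ) + a + 1) * x ^ (2 * a)) * hch

lemma sum_ext (m M : ℕ) (h : m + 1 ≤ M) (y : ℝ) :
    ∑ j ∈ Finset.range M, cc m j * y ^ (2 * j) =
      ∑ j ∈ Finset.range (m + 1), cc m j * y ^ (2 * j) := by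
  symm
  apply Finset.sum_subset (Finset.range_subset_range.mpr h)
  intro j _ hj
  rw [Finset.mem_range, not_lt] at hj
  rw [cc_of_gt (by omega), zero_mul]

lemma key (m : ℕ) (θ : ℝ) :
    ∑ j ∈ Finset.range (m + 1), cc m j * (Real.cos θ) ^ (2 * j) =
      (-1 : ℝ) ^ m *
        Polynomial.eval (Real.cos (2 * θ)) (Polynomial.Chebyshev.U ℝ (m : ℤ)) := by
  induction m using Nat.twoStepInduction with
  | zero => simp [cc_zero, Polynomial.Chebyshev.U_zero]
  | one =>
      rw [Finset.sum_range_succ, Finset.sum_range_one, cc_zero,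
        cc_of_le (le_refl 1)]
      norm_num [Nat.factorial, Polynomial.Chebyshev.U_one, Real.cos_two_mul]
      ring
  | more n ih1 ih2 =>
      set y := Real.cos θ with hy
      have e1 : ∑ j ∈ Finset.range (n + 3), cc (n + 2) j * y ^ (2 * j)
          = (∑ j ∈ Finset.range (n + 3), 2 * (cc (n + 1) j * y ^ (2 * j)))
            - (∑ j ∈ Finset.range (n + 3),
                (if j = 0 then 0 else 4 * cc (n + 1) (j - 1)) * y ^ (2 * j))
            - ∑ j ∈ Finset.range (n + 3), cc n j * y ^ (2 * j) := by
        rw [← Finset.sum_sub_distrib, ← Finset.sum_sub_distrib]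
        exact Finset.sum_congr rfl fun j _ => by rw [crec]; ring
      have e2 : ∑ j ∈ Finset.range (n + 3),
            (if j = 0 then 0 else 4 * cc (n + 1) (j - 1)) * y ^ (2 * j)
          = 4 * y ^ 2 * ∑ j ∈ Finset.range (n + 2), cc (n + 1) j * y ^ (2 * j) := by
        rw [Finset.sum_range_succ' _ (n + 2)]
        simp only [Nat.add_sub_cancel, Nat.succ_ne_zero, if_false, if_true,
          eq_self_iff_true, zero_mul, add_zero]
        rw [Finset.mul_sum]
        exact Finset.sum_congr rfl fun j _ => by ring
      rw [show n + 2 + 1 = n + 3 by ring, e1, e2, ← Finset.mul_sum,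
        sum_ext (n + 1) (n + 3) (by omega), sum_ext n (n + 3) (by omega),
        ih1, ih2,
        show ((n + 2 : ℕ) : ℤ) = (n : ℤ) + 2 by push_cast; ring,
        Polynomial.Chebyshev.U_add_two]
      push_cast
      simp only [Polynomial.eval_sub, Polynomial.eval_mul, Polynomial.eval_ofNat,
        Polynomial.eval_X]
      rw [Real.cos_two_mul, ← hy]
      ring


/-- Half-trigonometric form of the even-degree Chebyshev polynomials of the sixth kind:
`S_{2m}(−1,1,−5,2;cos θ) = (−1)^m sin((2m+2)θ)/((2m+2)cos θ sin θ)`. -/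
theorem sixth_kind_chebyshev_trig_form (m : ℕ) (θ : ℝ)
    (hc : Real.cos θ ≠ 0) (hs : Real.sin θ ≠ 0) :
    S (-1) 1 (-5) 2 (2 * m) (Real.cos θ) =
      (-1 : ℝ) ^ m * Real.sin ((2 * (m : ℝ) + 2) * θ) /
        ((2 * (m : ℝ) + 2) * Real.cos θ * Real.sin θ) := by
  have hS := S_eval m (Real.cos θ)
  have hk := key m θ
  have hU := Polynomial.Chebyshev.U_real_cos (2 * θ) (m : ℤ)
  have hE : Real.sin ((2 * (m : ℝ) + 2) * θ) =
      Polynomial.eval (Real.cos (2 * θ)) (Polynomial.Chebyshev.U ℝ (m : ℤ)) *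
        (2 * Real.sin θ * Real.cos θ) := by
    rw [show (2 * (m : ℝ) + 2) * θ = (((m : ℤ) : ℝ) + 1) * (2 * θ) by push_cast; ring,
      ← hU, Real.sin_two_mul]
  have h0 : (2 * (m : ℝ) + 2) * Real.cos θ * Real.sin θ ≠ 0 :=
    mul_ne_zero (mul_ne_zero (by positivity) hc) hs
  rw [hE, eq_div_iff h0]
  linear_combination (2 * Real.cos θ * Real.sin θ) * (hS.trans hk)
end

section
/- For every natural number n ≥ 1 and every real x, the monic Chebyshev polynomial of the fifth kind of degree 2n factors as S̄_{2n}(−1, 1, −3, 2; x) = ∏_{k=1, k≠n+1}^{2n+1} ( x − cos((2k−1)π/(2(2n+1))) ), the product running over k = 1, …, 2n+1 with k = n+1 omitted. -/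
open Finset Real MeasureTheory

/-- Closed-form coefficients: `Acoef m k` is the coefficient of `x^(2m)` in
`S̄_{2(m+k)}(−1,1,−3,2;x)`. -/
noncomputable def Acoef (m k : ℕ) : ℝ :=
  (-1)^k * (2*(m+k)+1) * (Nat.factorial (2*m+k)) / (4^k * (Nat.factorial k) * (Nat.factorial (2*m+1)))

lemma Acoef_zero (m : ℕ) : Acoef m 0 = 1 := by
  have h : Nat.factorial (2*m+1) = (2*m+1) * Nat.factorial (2*m) := Nat.factorial_succ _
  simp only [Acoef, pow_zero, Nat.factorial_zero, h]
  push_cast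
  have h1 : (Nat.factorial (2*m) : ℝ) ≠ 0 := by positivity
  field_simp
  simp

lemma Acoef_one (m : ℕ) : Acoef m 1 = -(2*(m:ℝ)+3)/4 := by
  simp only [Acoef, pow_one, Nat.factorial_one]
  have h1 : (Nat.factorial (2*m+1) : ℝ) ≠ 0 := by positivity
  push_cast
  field_simp
  ring

lemma Acoef01 : Acoef 0 1 = -3/4 := by
  rw [Acoef_one]; norm_num

lemma Acoef_rec1 (m : ℕ) : 16 * Acoef (m+1) 1 = 16 * Acoef m 1 - 8 * Acoef (m+1) 0 := by
  rw [Acoef_zero, Acoef_one, Acoef_one]; push_cast; ring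

lemma Acoef_rec0 (k : ℕ) : 16 * Acoef 0 (k+2) = -8 * Acoef 0 (k+1) - Acoef 0 k := by
  simp only [Acoef]
  have e1 : 2*0+(k+2) = (2*0+k)+1+1 := by ring
  have e2 : 2*0+(k+1) = (2*0+k)+1 := by ring
  have e3 : (k+2).factorial = (k+2)*((k+1)*k.factorial) := by
    rw [Nat.factorial_succ, Nat.factorial_succ]
  have e4 : (k+1).factorial = (k+1)*k.factorial := Nat.factorial_succ _
  rw [e1, e2, Nat.factorial_succ ((2*0+k)+1), Nat.factorial_succ (2*0+k), e3, e4]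
  have h1 : (Nat.factorial k : ℝ) ≠ 0 := by positivity
  have h2 : (Nat.factorial (2*0+k) : ℝ) ≠ 0 := by positivity
  have h3 : (Nat.factorial (2*0+1) : ℝ) ≠ 0 := by positivity
  have h4 : ((4:ℝ))^k ≠ 0 := by positivity
  push_cast [pow_succ]
  field_simp
  ring

set_option maxHeartbeats 1600000 in
lemma Acoef_rec (m k : ℕ) :
    16 * Acoef (m+1) (k+2) = 16 * Acoef m (k+2) - 8 * Acoef (m+1) (k+1) - Acoef (m+1) k := by
  simp only [Acoef]
  have e1 : 2*(m+1)+(k+2) = (2*m+k)+1+1+1+1 := by ring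
  have e2 : 2*(m+1)+(k+1) = (2*m+k)+1+1+1 := by ring
  have e3 : 2*(m+1)+k = (2*m+k)+1+1 := by ring
  have e4 : 2*m+(k+2) = (2*m+k)+1+1 := by ring
  have e5 : 2*(m+1)+1 = (2*m+1)+1+1 := by ring
  have e6 : (k+2).factorial = (k+2)*((k+1)*k.factorial) := by
    rw [Nat.factorial_succ, Nat.factorial_succ]
  have e7 : (k+1).factorial = (k+1)*k.factorial := Nat.factorial_succ _
  rw [e1, e2, e3, e4, e5, e6, e7,
    Nat.factorial_succ ((2*m+k)+1+1+1), Nat.factorial_succ ((2*m+k)+1+1),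
    Nat.factorial_succ ((2*m+k)+1), Nat.factorial_succ (2*m+k),
    Nat.factorial_succ ((2*m+1)+1), Nat.factorial_succ (2*m+1)]
  have h1 : (Nat.factorial k : ℝ) ≠ 0 := by positivity
  have h2 : (Nat.factorial (2*m+k) : ℝ) ≠ 0 := by positivity
  have h3 : (Nat.factorial (2*m+1) : ℝ) ≠ 0 := by positivity
  have h4 : ((4:ℝ))^k ≠ 0 := by positivity
  push_cast [pow_succ]
  field_simp
  ring

/-- The polynomial `S̄_{2n}(−1,1,−3,2;·)` as a finite sum with closed-form coefficients. -/
noncomputable def fsum (n : ℕ) (x : ℝ) : ℝ :=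
  ∑ k ∈ Finset.range (n+1), Acoef (n-k) k * x^(2*(n-k))

lemma fsum_rec (n : ℕ) (x : ℝ) :
    16 * fsum (n+2) x + 8 * fsum (n+1) x + fsum n x = 16 * x^2 * fsum (n+1) x := by
  have h2 : 16 * fsum (n+2) x
      = ∑ j ∈ Finset.range (n+3), 16 * Acoef (n+2-j) j * x^(2*(n+2-j)) := by
    rw [fsum, mul_sum]
    exact sum_congr rfl (fun j hj => by ring)
  have h1 : 8 * fsum (n+1) x
      = ∑ j ∈ Finset.range (n+3),
          (if j = 0 then 0 else 8 * Acoef (n+2-j) (j-1)) * x^(2*(n+2-j)) := by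
    rw [Finset.sum_range_succ' _ (n+2)]
    norm_num
    rw [fsum, mul_sum]
    apply sum_congr rfl
    intro j hj
    rw [show n+2-(j+1) = n+1-j from by omega]
    ring
  have h0 : fsum n x
      = ∑ j ∈ Finset.range (n+3),
          (if j ≤ 1 then 0 else Acoef (n+2-j) (j-2)) * x^(2*(n+2-j)) := by
    rw [Finset.sum_range_succ' _ (n+2), Finset.sum_range_succ' _ (n+1)]
    norm_num
    rw [fsum]
    apply sum_congr rfl
    intro j hj
    rw [show n+2-(j+1+1) = n-j from by omega, show j+1+1-2 = j from by omega]
  have hr : 16 * x^2 * fsum (n+1) x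
      = ∑ j ∈ Finset.range (n+3),
          (if j = n+2 then 0 else 16 * Acoef (n+1-j) j) * x^(2*(n+2-j)) := by
    rw [Finset.sum_range_succ]
    rw [if_pos rfl, zero_mul, add_zero, fsum, mul_sum]
    apply sum_congr rfl
    intro j hj
    rw [mem_range] at hj
    rw [if_neg (by omega : ¬ j = n+2)]
    rw [show 2*(n+2-j) = 2*(n+1-j) + 2 from by omega]
    ring
  rw [h2, h1, h0, hr, ← Finset.sum_add_distrib, ← Finset.sum_add_distrib]
  apply sum_congr rfl
  intro j hj
  rw [mem_range] at hj
  rw [← add_mul, ← add_mul]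
  congr 1
  rcases Nat.lt_or_ge j 2 with hj2 | hj2
  · interval_cases j
    · rw [if_pos rfl, if_pos (by norm_num), if_neg (by omega : ¬ (0:ℕ) = n+2)]
      rw [show n+2-0 = n+2 from rfl, show n+1-0 = n+1 from rfl, Acoef_zero, Acoef_zero]
      norm_num
    · rw [if_neg (by omega : ¬ (1:ℕ) = 0), if_pos (by norm_num), if_neg (by omega : ¬ (1:ℕ) = n+2)]
      rw [show n+2-1 = n+1 from by omega, show n+1-1 = n from by omega, show (1:ℕ)-1 = 0 from rfl]
      have := Acoef_rec1 n
      linarith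
  · rw [if_neg (by omega : ¬ j = 0), if_neg (by omega : ¬ j ≤ 1)]
    rcases Nat.lt_or_ge j (n+2) with hjn | hjn
    · rw [if_neg (by omega : ¬ j = n+2)]
      obtain ⟨k, rfl⟩ : ∃ k, j = k+2 := ⟨j-2, by omega⟩
      obtain ⟨m, hm⟩ : ∃ m, n = k+m+1 := ⟨n-k-1, by omega⟩
      subst hm
      rw [show k+m+1+2-(k+2) = m+1 from by omega, show k+m+1+1-(k+2) = m from by omega,
        show k+2-1 = k+1 from by omega, show k+2-2 = k from by omega]
      have := Acoef_rec m k
      linarith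
    · rw [if_pos (by omega : j = n+2)]
      obtain rfl : j = n+2 := by omega
      rw [show n+2-(n+2) = 0 from by omega, show n+2-1 = n+1 from by omega,
        show n+2-2 = n from by omega]
      have := Acoef_rec0 n
      linarith

noncomputable def Nn (n : ℕ) : ℝ := ∏ i ∈ Finset.range n, (2*(i:ℝ)+3)/(-(2*(i:ℝ))-2*n-2)
noncomputable def Pp (n j : ℕ) : ℝ := ∏ i ∈ Finset.range j, ((-(2*(i:ℝ))-2*n-2)/(2*(i:ℝ)+3))

set_option maxHeartbeats 800000 in
lemma scalar_step (k m : ℕ) :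
    (Nat.choose (k+1+m) (k+1) : ℝ) * Acoef (m+1) k * (2*m+3)
      = Acoef m (k+1) * (Nat.choose (k+1+m) k) * (-(2*(m:ℝ))-2*((k+1+m : ℕ):ℝ)-2) := by
  have hnat : (k+1+m).choose (k+1) * (k+1) = (k+1+m).choose k * (m+1) := by
    rw [Nat.choose_succ_right_eq]; congr 1; omega
  have hcR : ((k+1+m).choose (k+1) : ℝ) = ((k+1+m).choose k) * (m+1) / (k+1) := by
    rw [eq_div_iff (by positivity : ((k:ℝ)+1) ≠ 0)]
    exact_mod_cast hnat
  simp only [Acoef]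
  have e1 : 2*(m+1)+k = (2*m+k)+1+1 := by ring
  have e2 : 2*m+(k+1) = (2*m+k)+1 := by ring
  have e3 : 2*(m+1)+1 = (2*m+1)+1+1 := by ring
  have e4 : (k+1).factorial = (k+1)*k.factorial := Nat.factorial_succ _
  rw [e1, e2, e3, e4, Nat.factorial_succ ((2*m+k)+1), Nat.factorial_succ (2*m+k),
    Nat.factorial_succ ((2*m+1)+1), Nat.factorial_succ (2*m+1), hcR]
  have h1 : (Nat.factorial k : ℝ) ≠ 0 := by positivity
  have h2 : (Nat.factorial (2*m+k) : ℝ) ≠ 0 := by positivity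
  have h3 : (Nat.factorial (2*m+1) : ℝ) ≠ 0 := by positivity
  have h4 : ((4:ℝ))^k ≠ 0 := by positivity
  push_cast [pow_succ]
  field_simp
  ring

lemma key_s13 (n : ℕ) : ∀ k, k ≤ n → (Nat.choose n k : ℝ) * (Nn n * Pp n (n-k)) = Acoef (n-k) k := by
  intro k
  induction k with
  | zero =>
    intro _
    rw [Nat.sub_zero, Nat.choose_zero_right, Acoef_zero, Nn, Pp, ← Finset.prod_mul_distrib]
    push_cast
    rw [Finset.prod_congr rfl (fun i _ => ?_), Finset.prod_const_one, one_mul]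
    have h1 : (2*(i:ℝ)+3) ≠ 0 := by positivity
    have h2 : (-(2*(i:ℝ))-2*n-2) ≠ 0 := by
      have : (0:ℝ) < 2*(i:ℝ)+2*n+2 := by positivity
      linarith
    field_simp
    apply div_self
    intro h; apply h2; linarith
  | succ k ih =>
    intro hk
    have hk' : k ≤ n := by omega
    obtain ⟨m, rfl⟩ : ∃ m, n = k+1+m := ⟨n-(k+1), by omega⟩
    have ihm := ih hk'
    rw [show k+1+m-k = m+1 from by omega] at ihm
    rw [show k+1+m-(k+1) = m from by omega]
    rw [Pp, Finset.prod_range_succ, ← Pp] at ihm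
    set X := Nn (k+1+m) * Pp (k+1+m) m with hX
    have hr3 : (2*(m:ℝ)+3) ≠ 0 := by positivity
    have hrn : (-(2*(m:ℝ))-2*((k+1+m : ℕ):ℝ)-2) ≠ 0 := by
      push_cast
      have : (0:ℝ) < 2*(m:ℝ)+2*((k:ℝ)+1+m)+2 := by positivity
      linarith
    have hstep := scalar_step k m
    have expand : (Nat.choose (k+1+m) k : ℝ) * (X * ((-(2*(m:ℝ))-2*((k+1+m:ℕ):ℝ)-2)/(2*(m:ℝ)+3)))
        = Acoef (m+1) k := by
      rw [← ihm, hX]; ring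
    have hcne : ((k+1+m).choose k : ℝ) ≠ 0 := by
      exact_mod_cast Nat.cast_ne_zero.mpr (Nat.choose_pos (by omega : k ≤ k+1+m)).ne'
    have expand2 : ((k+1+m).choose k : ℝ) * X * (-(2*(m:ℝ))-2*((k+1+m : ℕ):ℝ)-2)
        = Acoef (m+1) k * (2*m+3) := by
      rw [← expand]; field_simp
    have h5 : (((k+1+m).choose k : ℝ) * (-(2*(m:ℝ))-2*((k+1+m : ℕ):ℝ)-2))
          * (((k+1+m).choose (k+1) : ℝ) * X)
        = (((k+1+m).choose k : ℝ) * (-(2*(m:ℝ))-2*((k+1+m : ℕ):ℝ)-2)) * Acoef m (k+1) := by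
      linear_combination ((k+1+m).choose (k+1) : ℝ) * expand2 + hstep
    exact mul_left_cancel₀ (mul_ne_zero hcne hrn) h5

lemma Sbar_eq_fsum (n : ℕ) (x : ℝ) : Sbar (-1) 1 (-3) 2 (2*n) x = fsum n x := by
  have hdiv : 2*n/2 = n := by omega
  have hpow : ((-1:ℝ))^(2*n+1) = -1 := by
    rw [pow_succ, pow_mul]; norm_num
  rw [Sbar, S, hdiv, hpow, Finset.mul_sum, fsum]
  apply Finset.sum_congr rfl
  intro k hk
  rw [Finset.mem_range] at hk
  have hN : (∏ i ∈ Finset.range n,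
      ((2*(i:ℝ) + -1 + 2) * 1 + 2) / ((2*(i:ℝ) + -1 + 2*((n:ℕ):ℝ)) * (-1) + -3)) = Nn n := by
    rw [Nn]
    apply Finset.prod_congr rfl
    intro i _
    ring_nf
  have hP : (∏ i ∈ Finset.range (n-k),
      ((2*(i:ℝ) + -1 + 2*((n:ℕ):ℝ)) * (-1) + -3) / ((2*(i:ℝ) + -1 + 2) * 1 + 2)) = Pp n (n-k) := by
    rw [Pp]
    apply Finset.prod_congr rfl
    intro i _
    ring_nf
  rw [hN, hP, show 2*n - 2*k = 2*(n-k) from by omega, ← key_s13 n k (by omega)]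
  ring

lemma fsum_T (n : ℕ) (x : ℝ) :
    4^n * x * fsum n x = (Polynomial.Chebyshev.T ℝ (2*(n:ℤ)+1)).eval x := by
  induction n using Nat.twoStepInduction with
  | zero =>
    simp [fsum, Acoef_zero, Polynomial.Chebyshev.T_one]
  | one =>
    have h3 : (2*((1:ℕ):ℤ)+1) = 1+2 := by norm_num
    rw [h3, Polynomial.Chebyshev.T_add_two, Polynomial.Chebyshev.T_one,
      show ((1:ℤ)+1) = 2 from by norm_num, Polynomial.Chebyshev.T_two]
    simp [fsum, Finset.sum_range_succ, Acoef_zero, Acoef01]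
    ring
  | more n ih1 ih2 =>
    have e0 := congrArg (Polynomial.eval x) (Polynomial.Chebyshev.T_add_two ℝ (2*(n:ℤ)+1))
    have e1 := congrArg (Polynomial.eval x) (Polynomial.Chebyshev.T_add_two ℝ (2*(n:ℤ)+2))
    have e2 := congrArg (Polynomial.eval x) (Polynomial.Chebyshev.T_add_two ℝ (2*(n:ℤ)+3))
    simp only [Polynomial.eval_mul, Polynomial.eval_sub, Polynomial.eval_X,
      Polynomial.eval_ofNat] at e0 e1 e2
    push_cast at ih2 ⊢
    ring_nf at e0 e1 e2 ih1 ih2 ⊢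
    linear_combination (norm := ring_nf) (4^n*x) * fsum_rec n x - e2 - 2*x*e1 - e0 + (4*x^2-2) * ih2 - ih1

noncomputable def rt (n k : ℕ) : ℝ := Real.cos ((2*(k:ℝ)-1) * Real.pi / (2*(2*(n:ℝ)+1)))

noncomputable def tθ (n k : ℕ) : ℝ := (2*(k:ℝ)-1) * Real.pi / (2*(2*(n:ℝ)+1))

lemma t_mem (n k : ℕ) (h1 : 1 ≤ k) (h2 : k ≤ 2*n+1) : tθ n k ∈ Set.Icc 0 Real.pi := by
  unfold tθ
  constructor
  · apply div_nonneg _ (by positivity)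
    have : (1:ℝ) ≤ (k:ℝ) := by exact_mod_cast h1
    have := Real.pi_pos
    nlinarith
  · rw [div_le_iff₀ (by positivity)]
    have : (k:ℝ) ≤ 2*n+1 := by exact_mod_cast h2
    have := Real.pi_pos
    nlinarith

lemma rt_ne_zero (n k : ℕ) (h1 : 1 ≤ k) (h2 : k ≤ 2*n+1) (h3 : k ≠ n+1) : rt n k ≠ 0 := by
  intro h0
  rw [rt, Real.cos_eq_zero_iff] at h0
  obtain ⟨j, hj⟩ := h0
  have hpi := Real.pi_ne_zero
  have hden : (2*(2*(n:ℝ)+1)) ≠ 0 := by positivity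
  have hR : (2*(k:ℝ)-1) * 2 = (2*(j:ℝ)+1) * (2*(2*(n:ℝ)+1)) := by
    field_simp at hj
    nlinarith [hj, Real.pi_pos]
  have hZ : (2*(k:ℤ)-1) * 2 = (2*j+1) * (2*(2*(n:ℤ)+1)) := by exact_mod_cast hR
  have hk1 : (1:ℤ) ≤ (k:ℤ) := by exact_mod_cast h1
  have hk2 : (k:ℤ) ≤ 2*(n:ℤ)+1 := by exact_mod_cast h2
  have hk3 : (k:ℤ) ≠ (n:ℤ)+1 := by exact_mod_cast h3
  have hj1 : 1 ≤ 2*j+1 := by nlinarith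
  have hj2 : 2*j+1 < 2 := by nlinarith
  have : j = 0 := by omega
  subst this
  omega

/-- Factorization of the monic Chebyshev polynomials of the fifth kind of even degree:
`S̄_{2n}(−1,1,−3,2;x) = ∏_{k=1,k≠n+1}^{2n+1} (x − cos((2k−1)π/(2(2n+1))))`. -/
theorem fifth_kind_chebyshev_factorization (n : ℕ) (hn : 1 ≤ n) (x : ℝ) :
    Sbar (-1) 1 (-3) 2 (2 * n) x =
      ∏ k ∈ (Finset.Icc 1 (2 * n + 1)).erase (n + 1),
        (x - Real.cos ((2 * (k : ℝ) - 1) * Real.pi / (2 * (2 * (n : ℝ) + 1)))) := by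
  classical
  set s : Finset ℕ := (Finset.Icc 1 (2 * n + 1)).erase (n + 1) with hs
  have hmem : ∀ k ∈ s, 1 ≤ k ∧ k ≤ 2*n+1 ∧ k ≠ n+1 := by
    intro k hk
    rw [hs, Finset.mem_erase, Finset.mem_Icc] at hk
    exact ⟨hk.2.1, hk.2.2, hk.1⟩
  have hcard : s.card = 2*n := by
    rw [hs, Finset.card_erase_of_mem (by rw [Finset.mem_Icc]; omega), Nat.card_Icc]
    omega
  set Pb : Polynomial ℝ :=
    ∑ k ∈ Finset.range (n+1), Polynomial.C (Acoef (n-k) k) * Polynomial.X^(2*(n-k)) with hPb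
  have hPbeval : ∀ y, Pb.eval y = fsum n y := by
    intro y
    rw [hPb, Polynomial.eval_finset_sum, fsum]
    simp
  have hroot : ∀ k ∈ s, Pb.eval (rt n k) = 0 := by
    intro k hk
    obtain ⟨h1, h2, h3⟩ := hmem k hk
    have hT := fsum_T n (rt n k)
    have hcosT : (Polynomial.Chebyshev.T ℝ (2*(n:ℤ)+1)).eval (rt n k) = 0 := by
      rw [rt, Polynomial.Chebyshev.T_real_cos, Real.cos_eq_zero_iff]
      refine ⟨(k:ℤ) - 1, ?_⟩
      have hden : (2*(2*(n:ℝ)+1)) ≠ 0 := by positivity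
      push_cast
      field_simp
      ring
    rw [hcosT] at hT
    have hne := rt_ne_zero n k h1 h2 h3
    have h4 : (4:ℝ)^n ≠ 0 := by positivity
    have : fsum n (rt n k) = 0 := by
      rcases mul_eq_zero.mp hT with h | h
      · rcases mul_eq_zero.mp h with h' | h'
        · exact absurd h' h4
        · exact absurd h' hne
      · exact h
    rw [hPbeval]; exact this
  have hinj : Set.InjOn (rt n) ↑s := by
    intro k1 hk1 k2 hk2 h
    obtain ⟨h11, h12, _⟩ := hmem k1 (by exact_mod_cast hk1)
    obtain ⟨h21, h22, _⟩ := hmem k2 (by exact_mod_cast hk2)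
    have heq : tθ n k1 = tθ n k2 :=
      Real.injOn_cos (t_mem n k1 h11 h12) (t_mem n k2 h21 h22) h
    rw [tθ, tθ] at heq
    have hpi := Real.pi_ne_zero
    have hden : (2*(2*(n:ℝ)+1)) ≠ 0 := by positivity
    rw [div_left_inj' hden, mul_left_inj' hpi] at heq
    have h' : (k1:ℝ) = k2 := by linarith
    exact_mod_cast h'
  set Q : Polynomial ℝ := ∏ k ∈ s, (Polynomial.X - Polynomial.C (rt n k)) with hQ
  have hQm : Q.Monic :=
    Polynomial.monic_prod_of_monic _ _ (fun k _ => Polynomial.monic_X_sub_C _)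
  have hQdeg : Q.natDegree = 2*n := by
    rw [hQ, Polynomial.natDegree_prod_of_monic _ _ (fun k _ => Polynomial.monic_X_sub_C _)]
    simp [Polynomial.natDegree_X_sub_C, hcard]
  have hPbsplit : Pb = Polynomial.X^(2*n) +
      ∑ k ∈ Finset.range n, Polynomial.C (Acoef (n-(k+1)) (k+1)) * Polynomial.X^(2*(n-(k+1))) := by
    rw [hPb, Finset.sum_range_succ' _ n, Nat.sub_zero, Acoef_zero, map_one, one_mul, add_comm]
  have hRdeg : (∑ k ∈ Finset.range n,
      Polynomial.C (Acoef (n-(k+1)) (k+1)) * Polynomial.X^(2*(n-(k+1)))).degree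
      < ((2*n : ℕ) : WithBot ℕ) := by
    apply lt_of_le_of_lt (Polynomial.degree_sum_le _ _)
    rw [Finset.sup_lt_iff (by exact WithBot.bot_lt_coe _)]
    intro k hk
    rw [Finset.mem_range] at hk
    apply lt_of_le_of_lt (Polynomial.degree_C_mul_X_pow_le _ _)
    exact_mod_cast Nat.cast_lt.mpr (by omega : 2*(n-(k+1)) < 2*n)
  have hPm : Pb.Monic := by
    rw [hPbsplit]
    exact Polynomial.monic_X_pow_add hRdeg
  have hPdeg : Pb.degree = ((2*n : ℕ) : WithBot ℕ) := by
    rw [hPbsplit, Polynomial.degree_add_eq_left_of_degree_lt, Polynomial.degree_X_pow]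
    rw [Polynomial.degree_X_pow]
    exact hRdeg
  have hQdeg' : Q.degree = ((2*n : ℕ) : WithBot ℕ) := by
    rw [Polynomial.degree_eq_natDegree hQm.ne_zero, hQdeg]
  have hPQ : Pb = Q := by
    by_contra hne'
    have hd0 : Pb - Q ≠ 0 := sub_ne_zero.mpr hne'
    have hdeg_lt : (Pb - Q).degree < ((2*n : ℕ) : WithBot ℕ) := by
      have := Polynomial.degree_sub_lt (hPdeg.trans hQdeg'.symm) hPm.ne_zero
        (by rw [hPm.leadingCoeff, hQm.leadingCoeff])
      rwa [hPdeg] at this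
    have hnat_lt : (Pb - Q).natDegree < 2*n :=
      (Polynomial.natDegree_lt_iff_degree_lt hd0).mpr hdeg_lt
    have hzero : Pb - Q = 0 := by
      apply Polynomial.eq_zero_of_natDegree_lt_card_of_eval_eq_zero' (Pb - Q) (s.image (rt n))
      · intro y hy
        rw [Finset.mem_image] at hy
        obtain ⟨k, hk, rfl⟩ := hy
        rw [Polynomial.eval_sub, hroot k hk, hQ, Polynomial.eval_prod]
        rw [Finset.prod_eq_zero hk (by rw [Polynomial.eval_sub, Polynomial.eval_X,
          Polynomial.eval_C, sub_self])]
        ring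
      · rwa [Finset.card_image_of_injOn hinj, hcard]
    exact hd0 hzero
  calc Sbar (-1) 1 (-3) 2 (2*n) x = fsum n x := Sbar_eq_fsum n x
    _ = Pb.eval x := (hPbeval x).symm
    _ = Q.eval x := by rw [hPQ]
    _ = ∏ k ∈ s, (x - rt n k) := by
        rw [hQ, Polynomial.eval_prod]
        exact Finset.prod_congr rfl (fun k _ => by
          rw [Polynomial.eval_sub, Polynomial.eval_X, Polynomial.eval_C])
    _ = _ := Finset.prod_congr rfl (fun k _ => by rw [rt])
end

section
/- For every natural number n and every real x, the Chebyshev polynomial of the second kind satisfies U_n(x) = 2^{n} · S̄_n(−1, 1, −3, 0; x). -/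
open Finset Real MeasureTheory

lemma natE (m : ℕ) : ∀ k, k ≤ m →
    m.choose k * 2 ^ k * (∏ i ∈ Ico (m - k) m, (2 * i + 1)) * k.factorial *
      (2 * m - 2 * k).factorial = (2 * m).factorial := by
  intro k
  induction k with
  | zero => simp
  | succ k ih =>
    intro hk
    have hk' : k ≤ m := by omega
    obtain ⟨j, hj⟩ : ∃ j, m - k = j + 1 := ⟨m - (k + 1), by omega⟩
    have h1 : m - (k + 1) < m := by omega
    rw [Finset.prod_eq_prod_Ico_succ_bot h1]
    have h2 : m - (k + 1) + 1 = m - k := by omega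
    have h3 : m.choose (k + 1) * (k + 1) = m.choose k * (j + 1) := by
      rw [Nat.choose_succ_right_eq, ← hj]
    have h4 : 2 * m - 2 * k = 2 * j + 2 := by omega
    have h5 : 2 * m - 2 * (k + 1) = 2 * j := by omega
    have h6 : 2 * (m - (k + 1)) + 1 = 2 * j + 1 := by omega
    have := ih hk'
    rw [h4] at this
    rw [h2, h5, h6, hj]
    calc m.choose (k+1) * 2 ^ (k+1) * ((2 * j + 1) * ∏ i ∈ Ico (j+1) m, (2 * i + 1)) * (k+1).factorial * (2 * j).factorial
        = (m.choose (k+1) * (k+1)) * 2 ^ k * (∏ i ∈ Ico (j+1) m, (2 * i + 1)) * k.factorial * (2 * ((2 * j + 1) * (2 * j).factorial)) := by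
          rw [Nat.factorial_succ, pow_succ]; ring
      _ = m.choose k * 2 ^ k * (∏ i ∈ Ico (j+1) m, (2 * i + 1)) * k.factorial * ((2*j+2) * ((2 * j + 1) * (2 * j).factorial)) := by
          rw [h3]; ring
      _ = m.choose k * 2 ^ k * (∏ i ∈ Ico (j+1) m, (2 * i + 1)) * k.factorial * (2 * j + 2).factorial := by
          rw [show (2*j+2) = (2*j+1)+1 from rfl, Nat.factorial_succ, Nat.factorial_succ]
      _ = (2 * m).factorial := by rw [hj] at this; exact this

lemma natO (m : ℕ) : ∀ k, k ≤ m →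
    m.choose k * 2 ^ k * (∏ i ∈ Ico (m - k) m, (2 * i + 3)) * k.factorial *
      (2 * m + 1 - 2 * k).factorial = (2 * m + 1).factorial := by
  intro k
  induction k with
  | zero => simp
  | succ k ih =>
    intro hk
    have hk' : k ≤ m := by omega
    obtain ⟨j, hj⟩ : ∃ j, m - k = j + 1 := ⟨m - (k + 1), by omega⟩
    have h1 : m - (k + 1) < m := by omega
    rw [Finset.prod_eq_prod_Ico_succ_bot h1]
    have h2 : m - (k + 1) + 1 = m - k := by omega
    have h3 : m.choose (k + 1) * (k + 1) = m.choose k * (j + 1) := by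
      rw [Nat.choose_succ_right_eq, ← hj]
    have h4 : 2 * m + 1 - 2 * k = 2 * j + 3 := by omega
    have h5 : 2 * m + 1 - 2 * (k + 1) = 2 * j + 1 := by omega
    have h6 : 2 * (m - (k + 1)) + 3 = 2 * j + 3 := by omega
    have := ih hk'
    rw [h4, hj] at this
    rw [h2, h5, h6, hj]
    calc m.choose (k+1) * 2 ^ (k+1) * ((2 * j + 3) * ∏ i ∈ Ico (j+1) m, (2 * i + 3)) * (k+1).factorial * (2 * j + 1).factorial
        = (m.choose (k+1) * (k+1)) * 2 ^ k * (∏ i ∈ Ico (j+1) m, (2 * i + 3)) * k.factorial * (2 * ((2 * j + 3) * (2 * j + 1).factorial)) := by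
          rw [Nat.factorial_succ, pow_succ]; ring
      _ = m.choose k * 2 ^ k * (∏ i ∈ Ico (j+1) m, (2 * i + 3)) * k.factorial * ((2*j+2) * ((2 * j + 3) * (2 * j + 1).factorial)) := by
          rw [h3]; ring
      _ = m.choose k * 2 ^ k * (∏ i ∈ Ico (j+1) m, (2 * i + 3)) * k.factorial * (2 * j + 3).factorial := by
          have e : (2*j+3).factorial = (2*j+3) * ((2*j+2) * (2*j+1).factorial) := by
            rw [show (2*j+3).factorial = (2*j+3) * (2*j+2).factorial from Nat.factorial_succ _,
               show (2*j+2).factorial = (2*j+2) * (2*j+1).factorial from Nat.factorial_succ _]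
          rw [e]; ring
      _ = (2 * m + 1).factorial := this

lemma natBE (m : ℕ) : ∀ k, k ≤ m →
    (∏ i ∈ Ico (m - k) m, (i + m + 1)) * (2 * m - k).factorial = (2 * m).factorial := by
  intro k
  induction k with
  | zero => simp
  | succ k ih =>
    intro hk
    have hk' : k ≤ m := by omega
    have h1 : m - (k + 1) < m := by omega
    rw [Finset.prod_eq_prod_Ico_succ_bot h1]
    have h2 : m - (k + 1) + 1 = m - k := by omega
    have h3 : m - (k + 1) + m + 1 = (2 * m - (k + 1)) + 1 := by omega
    have h4 : 2 * m - k = (2 * m - (k + 1)) + 1 := by omega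
    have := ih hk'
    rw [h4, Nat.factorial_succ] at this
    rw [h2, h3]
    linarith [this]

lemma natBO (m : ℕ) : ∀ k, k ≤ m →
    (∏ i ∈ Ico (m - k) m, (i + m + 2)) * (2 * m + 1 - k).factorial = (2 * m + 1).factorial := by
  intro k
  induction k with
  | zero => simp
  | succ k ih =>
    intro hk
    have hk' : k ≤ m := by omega
    have h1 : m - (k + 1) < m := by omega
    rw [Finset.prod_eq_prod_Ico_succ_bot h1]
    have h2 : m - (k + 1) + 1 = m - k := by omega
    have h3 : m - (k + 1) + m + 2 = (2 * m + 1 - (k + 1)) + 1 := by omega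
    have h4 : 2 * m + 1 - k = (2 * m + 1 - (k + 1)) + 1 := by omega
    have := ih hk'
    rw [h4, Nat.factorial_succ] at this
    rw [h2, h3]
    linarith [this]


lemma coeffE (m k : ℕ) (hk : k ≤ m) :
    (2:ℝ)^(2*m) * (∏ i ∈ range m, (2*(i:ℝ)+1) / (-(2*(i:ℝ)+2*(m:ℝ)+2))) * (m.choose k) *
      (∏ i ∈ range (m-k), (-(2*(i:ℝ)+2*(m:ℝ)+2)) / (2*(i:ℝ)+1))
    = (-1:ℝ)^k * ((2*m-k).choose k) * 2^(2*m-2*k) := by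
  have hsplit : (∏ i ∈ range m, (2*(i:ℝ)+1) / (-(2*(i:ℝ)+2*(m:ℝ)+2)))
      = (∏ i ∈ range (m-k), (2*(i:ℝ)+1) / (-(2*(i:ℝ)+2*(m:ℝ)+2)))
        * ∏ i ∈ Ico (m-k) m, (2*(i:ℝ)+1) / (-(2*(i:ℝ)+2*(m:ℝ)+2)) := by
    rw [Finset.range_eq_Ico, ← Finset.prod_Ico_consecutive _ (Nat.zero_le (m-k)) (Nat.sub_le m k),
      ← Finset.range_eq_Ico]
  have hcancel : (∏ i ∈ range (m-k), (2*(i:ℝ)+1) / (-(2*(i:ℝ)+2*(m:ℝ)+2)))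
      * (∏ i ∈ range (m-k), (-(2*(i:ℝ)+2*(m:ℝ)+2)) / (2*(i:ℝ)+1)) = 1 := by
    rw [← Finset.prod_mul_distrib]
    apply Finset.prod_eq_one
    intro i _
    have h1 : (2*(i:ℝ)+1) ≠ 0 := by positivity
    have h2 : (-(2*(i:ℝ)+2*(m:ℝ)+2)) ≠ 0 := by
      have : (0:ℝ) < 2*(i:ℝ)+2*(m:ℝ)+2 := by positivity
      intro h; linarith [neg_eq_zero.mp h]
    rw [div_mul_div_comm, mul_comm (2*(i:ℝ)+1) (-(2*(i:ℝ)+2*(m:ℝ)+2))]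
    exact div_self (mul_ne_zero h2 h1)
  have hNA : (∏ i ∈ Ico (m-k) m, (2*(i:ℝ)+1)) = ((∏ i ∈ Ico (m-k) m, (2*i+1) : ℕ) : ℝ) := by
    push_cast; rfl
  have hNB : (∏ i ∈ Ico (m-k) m, (-(2*(i:ℝ)+2*(m:ℝ)+2)))
      = (-2:ℝ)^k * ((∏ i ∈ Ico (m-k) m, (i+m+1) : ℕ) : ℝ) := by
    have e : ∏ i ∈ Ico (m-k) m, (-(2*(i:ℝ)+2*(m:ℝ)+2))
        = ∏ i ∈ Ico (m-k) m, ((-2:ℝ) * ((i:ℝ)+(m:ℝ)+1)) :=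
      Finset.prod_congr rfl (fun i _ => by ring)
    rw [e, Finset.prod_mul_distrib, Finset.prod_const, Nat.card_Ico,
      show m - (m-k) = k by omega]
    push_cast; rfl
  have hIco : (∏ i ∈ Ico (m-k) m, (2*(i:ℝ)+1) / (-(2*(i:ℝ)+2*(m:ℝ)+2)))
      = (∏ i ∈ Ico (m-k) m, (2*(i:ℝ)+1)) / (∏ i ∈ Ico (m-k) m, (-(2*(i:ℝ)+2*(m:ℝ)+2))) :=
    Finset.prod_div_distrib _ _
  have f1 : ((m.choose k : ℝ)) * 2^k * ((∏ i ∈ Ico (m-k) m, (2*i+1) : ℕ) : ℝ)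
      * (k.factorial : ℝ) * ((2*m-2*k).factorial : ℝ) = ((2*m).factorial : ℝ) := by
    exact_mod_cast congrArg (Nat.cast : ℕ → ℝ) (natE m k hk)
  have f2 : ((∏ i ∈ Ico (m-k) m, (i+m+1) : ℕ) : ℝ) * ((2*m-k).factorial : ℝ)
      = ((2*m).factorial : ℝ) := by
    exact_mod_cast congrArg (Nat.cast : ℕ → ℝ) (natBE m k hk)
  have f3 : (((2*m-k).choose k : ℕ) : ℝ) * (k.factorial : ℝ) * ((2*m-2*k).factorial : ℝ)
      = ((2*m-k).factorial : ℝ) := by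
    have := Nat.choose_mul_factorial_mul_factorial (show k ≤ 2*m-k by omega)
    rw [show 2*m-k-k = 2*m-2*k by omega] at this
    exact_mod_cast congrArg (Nat.cast : ℕ → ℝ) this
  set NA : ℝ := ((∏ i ∈ Ico (m-k) m, (2*i+1) : ℕ) : ℝ) with hNA'
  set NB : ℝ := ((∏ i ∈ Ico (m-k) m, (i+m+1) : ℕ) : ℝ) with hNB'
  have hNBpos : (0:ℝ) < NB := by
    rw [hNB']
    have : 0 < ∏ i ∈ Ico (m-k) m, (i+m+1) := by positivity
    exact_mod_cast this
  have goal2 : (2:ℝ)^(2*m) * (m.choose k : ℝ) * NA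
      = ((2*m-k).choose k : ℝ) * 2^(2*m-2*k) * 2^k * NB := by
    have hKF : (0:ℝ) < (k.factorial : ℝ) * ((2*m-2*k).factorial : ℝ) * ((2*m-k).factorial : ℝ) := by
      positivity
    apply mul_left_cancel₀ (ne_of_gt hKF)
    have hpow : (2:ℝ)^(2*m) = 2^(2*m-2*k) * (2^k * 2^k) := by
      rw [← pow_add, ← pow_add]; congr 1; omega
    rw [hpow]
    linear_combination (2^(2*m-2*k)*2^k*((2*m-k).factorial : ℝ)) * f1
      - (2^(2*m-2*k)*2^k*((2*m-k).factorial : ℝ)) * f2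
      - (2^(2*m-2*k)*2^k*NB*((2*m-k).factorial : ℝ)) * f3
  have hs2 : ((-2:ℝ))^k = (-1:ℝ)^k * 2^k := by
    rw [show (-2:ℝ) = (-1)*2 by norm_num, mul_pow]
  have hs3 : ((-1:ℝ))^k * ((-1:ℝ))^k = 1 := by
    rw [← pow_add, ← two_mul, pow_mul]; norm_num
  rw [hsplit]
  calc (2:ℝ)^(2*m) * ((∏ i ∈ range (m-k), (2*(i:ℝ)+1) / (-(2*(i:ℝ)+2*(m:ℝ)+2)))
        * ∏ i ∈ Ico (m-k) m, (2*(i:ℝ)+1) / (-(2*(i:ℝ)+2*(m:ℝ)+2))) * (m.choose k : ℝ)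
        * (∏ i ∈ range (m-k), (-(2*(i:ℝ)+2*(m:ℝ)+2)) / (2*(i:ℝ)+1))
      = (2:ℝ)^(2*m) * (m.choose k : ℝ) * (NA / ((-2:ℝ)^k * NB))
        * ((∏ i ∈ range (m-k), (2*(i:ℝ)+1) / (-(2*(i:ℝ)+2*(m:ℝ)+2)))
          * (∏ i ∈ range (m-k), (-(2*(i:ℝ)+2*(m:ℝ)+2)) / (2*(i:ℝ)+1))) := by
        rw [hIco, hNA, hNB]; ring
    _ = (2:ℝ)^(2*m) * (m.choose k : ℝ) * NA / ((-2:ℝ)^k * NB) := by rw [hcancel]; ring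
    _ = (-1:ℝ)^k * ((2*m-k).choose k : ℝ) * 2^(2*m-2*k) := by
        rw [div_eq_iff (mul_ne_zero (pow_ne_zero _ (by norm_num : (-2:ℝ) ≠ 0)) (ne_of_gt hNBpos)),
          hs2]
        linear_combination goal2 - (((2*m-k).choose k : ℝ) * 2^(2*m-2*k) * 2^k * NB) * hs3


lemma coeffO (m k : ℕ) (hk : k ≤ m) :
    (2:ℝ)^(2*m+1) * (∏ i ∈ range m, (2*(i:ℝ)+3) / (-(2*(i:ℝ)+2*(m:ℝ)+4))) * (m.choose k) *
      (∏ i ∈ range (m-k), (-(2*(i:ℝ)+2*(m:ℝ)+4)) / (2*(i:ℝ)+3))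
    = (-1:ℝ)^k * ((2*m+1-k).choose k) * 2^(2*m+1-2*k) := by
  have hsplit : (∏ i ∈ range m, (2*(i:ℝ)+3) / (-(2*(i:ℝ)+2*(m:ℝ)+4)))
      = (∏ i ∈ range (m-k), (2*(i:ℝ)+3) / (-(2*(i:ℝ)+2*(m:ℝ)+4)))
        * ∏ i ∈ Ico (m-k) m, (2*(i:ℝ)+3) / (-(2*(i:ℝ)+2*(m:ℝ)+4)) := by
    rw [Finset.range_eq_Ico, ← Finset.prod_Ico_consecutive _ (Nat.zero_le (m-k)) (Nat.sub_le m k),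
      ← Finset.range_eq_Ico]
  have hcancel : (∏ i ∈ range (m-k), (2*(i:ℝ)+3) / (-(2*(i:ℝ)+2*(m:ℝ)+4)))
      * (∏ i ∈ range (m-k), (-(2*(i:ℝ)+2*(m:ℝ)+4)) / (2*(i:ℝ)+3)) = 1 := by
    rw [← Finset.prod_mul_distrib]
    apply Finset.prod_eq_one
    intro i _
    have h1 : (2*(i:ℝ)+3) ≠ 0 := by positivity
    have h2 : (-(2*(i:ℝ)+2*(m:ℝ)+4)) ≠ 0 := by
      have : (0:ℝ) < 2*(i:ℝ)+2*(m:ℝ)+4 := by positivity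
      intro h; linarith [neg_eq_zero.mp h]
    rw [div_mul_div_comm, mul_comm (2*(i:ℝ)+3) (-(2*(i:ℝ)+2*(m:ℝ)+4))]
    exact div_self (mul_ne_zero h2 h1)
  have hNA : (∏ i ∈ Ico (m-k) m, (2*(i:ℝ)+3)) = ((∏ i ∈ Ico (m-k) m, (2*i+3) : ℕ) : ℝ) := by
    push_cast; rfl
  have hNB : (∏ i ∈ Ico (m-k) m, (-(2*(i:ℝ)+2*(m:ℝ)+4)))
      = (-2:ℝ)^k * ((∏ i ∈ Ico (m-k) m, (i+m+2) : ℕ) : ℝ) := by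
    have e : ∏ i ∈ Ico (m-k) m, (-(2*(i:ℝ)+2*(m:ℝ)+4))
        = ∏ i ∈ Ico (m-k) m, ((-2:ℝ) * ((i:ℝ)+(m:ℝ)+2)) :=
      Finset.prod_congr rfl (fun i _ => by ring)
    rw [e, Finset.prod_mul_distrib, Finset.prod_const, Nat.card_Ico,
      show m - (m-k) = k by omega]
    push_cast; rfl
  have hIco : (∏ i ∈ Ico (m-k) m, (2*(i:ℝ)+3) / (-(2*(i:ℝ)+2*(m:ℝ)+4)))
      = (∏ i ∈ Ico (m-k) m, (2*(i:ℝ)+3)) / (∏ i ∈ Ico (m-k) m, (-(2*(i:ℝ)+2*(m:ℝ)+4))) :=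
    Finset.prod_div_distrib _ _
  have f1 : ((m.choose k : ℝ)) * 2^k * ((∏ i ∈ Ico (m-k) m, (2*i+3) : ℕ) : ℝ)
      * (k.factorial : ℝ) * ((2*m+1-2*k).factorial : ℝ) = ((2*m+1).factorial : ℝ) := by
    exact_mod_cast congrArg (Nat.cast : ℕ → ℝ) (natO m k hk)
  have f2 : ((∏ i ∈ Ico (m-k) m, (i+m+2) : ℕ) : ℝ) * ((2*m+1-k).factorial : ℝ)
      = ((2*m+1).factorial : ℝ) := by
    exact_mod_cast congrArg (Nat.cast : ℕ → ℝ) (natBO m k hk)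
  have f3 : (((2*m+1-k).choose k : ℕ) : ℝ) * (k.factorial : ℝ) * ((2*m+1-2*k).factorial : ℝ)
      = ((2*m+1-k).factorial : ℝ) := by
    have := Nat.choose_mul_factorial_mul_factorial (show k ≤ 2*m+1-k by omega)
    rw [show 2*m+1-k-k = 2*m+1-2*k by omega] at this
    exact_mod_cast congrArg (Nat.cast : ℕ → ℝ) this
  set NA : ℝ := ((∏ i ∈ Ico (m-k) m, (2*i+3) : ℕ) : ℝ) with hNA'
  set NB : ℝ := ((∏ i ∈ Ico (m-k) m, (i+m+2) : ℕ) : ℝ) with hNB'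
  have hNBpos : (0:ℝ) < NB := by
    rw [hNB']
    have : 0 < ∏ i ∈ Ico (m-k) m, (i+m+2) := by positivity
    exact_mod_cast this
  have goal2 : (2:ℝ)^(2*m+1) * (m.choose k : ℝ) * NA
      = ((2*m+1-k).choose k : ℝ) * 2^(2*m+1-2*k) * 2^k * NB := by
    have hKF : (0:ℝ) < (k.factorial : ℝ) * ((2*m+1-2*k).factorial : ℝ) * ((2*m+1-k).factorial : ℝ) := by
      positivity
    apply mul_left_cancel₀ (ne_of_gt hKF)
    have hpow : (2:ℝ)^(2*m+1) = 2^(2*m+1-2*k) * (2^k * 2^k) := by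
      rw [← pow_add, ← pow_add]; congr 1; omega
    rw [hpow]
    linear_combination (2^(2*m+1-2*k)*2^k*((2*m+1-k).factorial : ℝ)) * f1
      - (2^(2*m+1-2*k)*2^k*((2*m+1-k).factorial : ℝ)) * f2
      - (2^(2*m+1-2*k)*2^k*NB*((2*m+1-k).factorial : ℝ)) * f3
  have hs2 : ((-2:ℝ))^k = (-1:ℝ)^k * 2^k := by
    rw [show (-2:ℝ) = (-1)*2 by norm_num, mul_pow]
  have hs3 : ((-1:ℝ))^k * ((-1:ℝ))^k = 1 := by
    rw [← pow_add, ← two_mul, pow_mul]; norm_num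
  rw [hsplit]
  calc (2:ℝ)^(2*m+1) * ((∏ i ∈ range (m-k), (2*(i:ℝ)+3) / (-(2*(i:ℝ)+2*(m:ℝ)+4)))
        * ∏ i ∈ Ico (m-k) m, (2*(i:ℝ)+3) / (-(2*(i:ℝ)+2*(m:ℝ)+4))) * (m.choose k : ℝ)
        * (∏ i ∈ range (m-k), (-(2*(i:ℝ)+2*(m:ℝ)+4)) / (2*(i:ℝ)+3))
      = (2:ℝ)^(2*m+1) * (m.choose k : ℝ) * (NA / ((-2:ℝ)^k * NB))
        * ((∏ i ∈ range (m-k), (2*(i:ℝ)+3) / (-(2*(i:ℝ)+2*(m:ℝ)+4)))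
          * (∏ i ∈ range (m-k), (-(2*(i:ℝ)+2*(m:ℝ)+4)) / (2*(i:ℝ)+3))) := by
        rw [hIco, hNA, hNB]; ring
    _ = (2:ℝ)^(2*m+1) * (m.choose k : ℝ) * NA / ((-2:ℝ)^k * NB) := by rw [hcancel]; ring
    _ = (-1:ℝ)^k * ((2*m+1-k).choose k : ℝ) * 2^(2*m+1-2*k) := by
        rw [div_eq_iff (mul_ne_zero (pow_ne_zero _ (by norm_num : (-2:ℝ) ≠ 0)) (ne_of_gt hNBpos)),
          hs2]
        linear_combination goal2 - (((2*m+1-k).choose k : ℝ) * 2^(2*m+1-2*k) * 2^k * NB) * hs3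

noncomputable def f (n : ℕ) (x : ℝ) : ℝ :=
  ∑ k ∈ range (n/2+1), (-1:ℝ)^k * ((n-k).choose k : ℝ) * (2*x)^(n-2*k)

lemma f_rec (n : ℕ) (x : ℝ) : f (n+2) x = 2*x * f (n+1) x - f n x := by
  have hL : f (n+2) x
      = (∑ k ∈ range (n/2+1), (-1:ℝ)^(k+1) * ((n+1-k).choose (k+1) : ℝ) * (2*x)^(n-2*k))
        + (2*x)^(n+2) := by
    unfold f
    rw [show (n+2)/2+1 = (n/2+1)+1 by omega, Finset.sum_range_succ']
    congr 1
    · apply Finset.sum_congr rfl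
      intro k hk
      simp only [Finset.mem_range] at hk
      rw [show n+2-(k+1) = n+1-k by omega, show n+2-2*(k+1) = n-2*k by omega]
    · simp
  have hsub : range ((n+1)/2) ⊆ range (n/2+1) := by
    intro a ha; simp only [Finset.mem_range] at ha ⊢; omega
  have hR1 : 2*x * f (n+1) x
      = (∑ k ∈ range (n/2+1), (-1:ℝ)^(k+1) * ((n-k).choose (k+1) : ℝ) * (2*x)^(n-2*k))
        + (2*x)^(n+2) := by
    unfold f
    rw [Finset.mul_sum, Finset.sum_range_succ']
    congr 1
    · have e1 : ∀ k ∈ range ((n+1)/2),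
          2*x*((-1:ℝ)^(k+1) * ((n+1-(k+1)).choose (k+1):ℝ) * (2*x)^(n+1-2*(k+1)))
          = (-1:ℝ)^(k+1) * ((n-k).choose (k+1):ℝ) * (2*x)^(n-2*k) := by
        intro k hk
        simp only [Finset.mem_range] at hk
        obtain ⟨e, he⟩ : ∃ e, n - 2*k = e + 1 := ⟨n-2*k-1, by omega⟩
        rw [show n+1-(k+1) = n-k by omega, show n+1-2*(k+1) = e by omega, he, pow_succ]
        ring
      rw [Finset.sum_congr rfl e1]
      apply Finset.sum_subset hsub
      intro k hk hnk
      simp only [Finset.mem_range] at hk hnk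
      have : n - k < k+1 := by omega
      simp [Nat.choose_eq_zero_of_lt this]
    · simp [pow_succ]
      ring
  rw [hL, hR1]
  unfold f
  have key : (∑ k ∈ range (n/2+1), (-1:ℝ)^(k+1) * ((n+1-k).choose (k+1) : ℝ) * (2*x)^(n-2*k))
      = (∑ k ∈ range (n/2+1), (-1:ℝ)^(k+1) * ((n-k).choose (k+1) : ℝ) * (2*x)^(n-2*k))
        - ∑ k ∈ range (n/2+1), (-1:ℝ)^k * ((n-k).choose k : ℝ) * (2*x)^(n-2*k) := by
    rw [← Finset.sum_sub_distrib]
    apply Finset.sum_congr rfl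
    intro k hk
    simp only [Finset.mem_range] at hk
    rw [show n+1-k = (n-k)+1 by omega, Nat.choose_succ_succ]
    push_cast
    ring
  rw [key]
  ring

lemma U_eval (n : ℕ) (x : ℝ) :
    (Polynomial.Chebyshev.U ℝ (n : ℤ)).eval x = f n x := by
  induction n using Nat.twoStepInduction with
  | zero => simp [f, Polynomial.Chebyshev.U_zero]
  | one => simp [f, Polynomial.Chebyshev.U_one]
  | more n ih1 ih2 =>
    have : ((n+2 : ℕ) : ℤ) = (n : ℤ) + 2 := by push_cast; ring
    rw [this, Polynomial.Chebyshev.U_add_two]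
    simp only [Polynomial.eval_sub, Polynomial.eval_mul, Polynomial.eval_ofNat,
      Polynomial.eval_X]
    rw [show ((n:ℤ)+1) = ((n+1:ℕ):ℤ) by push_cast; ring]
    rw [ih1, ih2, f_rec]

lemma mainE (m : ℕ) (x : ℝ) : 2^(2*m) * Sbar (-1) 1 (-3) 0 (2*m) x = f (2*m) x := by
  have hsign : (-1:ℝ)^(2*m+1) = -1 := Odd.neg_one_pow ⟨m, by ring⟩
  have hdiv : 2*m/2 = m := by omega
  unfold Sbar S f
  rw [hdiv, ← mul_assoc, Finset.mul_sum]
  apply Finset.sum_congr rfl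
  intro k hk
  simp only [Finset.mem_range] at hk
  have hk' : k ≤ m := by omega
  have e1 : ∀ i ∈ range m,
      ((2*(i:ℝ) + (-1:ℝ)^(2*m+1) + 2)*1 + 0) /
        ((2*(i:ℝ) + (-1:ℝ)^(2*m+1) + 2*(m:ℝ))*(-1) + (-3))
      = (2*(i:ℝ)+1) / (-(2*(i:ℝ)+2*(m:ℝ)+2)) := by
    intro i _
    rw [hsign]; congr 1 <;> ring
  have e2 : ∀ i ∈ range (m-k),
      ((2*(i:ℝ) + (-1:ℝ)^(2*m+1) + 2*(m:ℝ))*(-1) + (-3)) /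
        ((2*(i:ℝ) + (-1:ℝ)^(2*m+1) + 2)*1 + 0)
      = (-(2*(i:ℝ)+2*(m:ℝ)+2)) / (2*(i:ℝ)+1) := by
    intro i _
    rw [hsign]; congr 1 <;> ring
  rw [Finset.prod_congr rfl e1, Finset.prod_congr rfl e2]
  linear_combination (x^(2*m-2*k)) * coeffE m k hk'

lemma mainO (m : ℕ) (x : ℝ) : 2^(2*m+1) * Sbar (-1) 1 (-3) 0 (2*m+1) x = f (2*m+1) x := by
  have hsign : (-1:ℝ)^(2*m+1+1) = 1 := Even.neg_one_pow ⟨m+1, by ring⟩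
  have hdiv : (2*m+1)/2 = m := by omega
  unfold Sbar S f
  rw [hdiv, ← mul_assoc, Finset.mul_sum]
  apply Finset.sum_congr rfl
  intro k hk
  simp only [Finset.mem_range] at hk
  have hk' : k ≤ m := by omega
  have e1 : ∀ i ∈ range m,
      ((2*(i:ℝ) + (-1:ℝ)^(2*m+1+1) + 2)*1 + 0) /
        ((2*(i:ℝ) + (-1:ℝ)^(2*m+1+1) + 2*(m:ℝ))*(-1) + (-3))
      = (2*(i:ℝ)+3) / (-(2*(i:ℝ)+2*(m:ℝ)+4)) := by
    intro i _
    rw [hsign]; congr 1 <;> ring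
  have e2 : ∀ i ∈ range (m-k),
      ((2*(i:ℝ) + (-1:ℝ)^(2*m+1+1) + 2*(m:ℝ))*(-1) + (-3)) /
        ((2*(i:ℝ) + (-1:ℝ)^(2*m+1+1) + 2)*1 + 0)
      = (-(2*(i:ℝ)+2*(m:ℝ)+4)) / (2*(i:ℝ)+3) := by
    intro i _
    rw [hsign]; congr 1 <;> ring
  rw [Finset.prod_congr rfl e1, Finset.prod_congr rfl e2]
  linear_combination (x^(2*m+1-2*k)) * coeffO m k hk'

/-- The Chebyshev polynomials of the second kind in terms of the basic class:
`U_n(x) = 2^n · S̄_n(−1,1,−3,0;x)`. -/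
theorem chebyshevU_eq_Sbar (n : ℕ) (x : ℝ) :
    (Polynomial.Chebyshev.U ℝ (n : ℤ)).eval x =
      2 ^ n * Sbar (-1) 1 (-3) 0 n x := by
  rw [U_eval]
  rcases Nat.even_or_odd n with ⟨m, hm⟩ | ⟨m, hm⟩
  · rw [show n = 2*m by omega, mainE]
  · rw [show n = 2*m+1 by omega, mainO]
end

section
/- For every natural number n and every real x, S̄_n(0, 1, −2, 0; x) = (√2)^{−n} · He_n(√2 · x), where He_n denotes the (probabilists') Hermite polynomial as in Mathlib (Polynomial.hermite n, evaluated over ℝ). Equivalently, the physicists' Hermite polynomial H_n(x) = 2^{n/2} He_n(√2 x) satisfies H_n(x) = 2^n · S̄_n(0, 1, −2, 0; x). -/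
open Finset Real MeasureTheory
open scoped Nat

lemma keyNat (b : ℕ) (hb : b ≤ 1) : ∀ (m k : ℕ), k ≤ m →
    Nat.choose m k * ∏ i ∈ Finset.Ico (m - k) m, (2 * i + 2 * b + 1) =
      (2 * k - 1)‼ * Nat.choose (2 * m + b) (2 * k)
  | m, 0, _ => by simp
  | m, k + 1, hk => by
    have hk' : k ≤ m := by omega
    have IH := keyNat b hb m k hk'
    obtain ⟨a, rfl⟩ : ∃ a, m = k + 1 + a := ⟨m - (k + 1), by omega⟩
    rw [Finset.prod_eq_prod_Ico_succ_bot (show k + 1 + a - (k + 1) < k + 1 + a by omega)]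
    rw [show k + 1 + a - (k + 1) + 1 = k + 1 + a - k from by omega]
    rw [show k + 1 + a - (k + 1) = a from by omega]
    rw [show 2 * (k + 1) - 1 = 2 * k + 1 from by omega]
    have h4 : (2 * k + 1)‼ = (2 * k + 1) * (2 * k - 1)‼ := by
      rcases k with _ | k
      · simp [Nat.doubleFactorial]
      · rw [show 2 * (k + 1) + 1 = 2 * k + 1 + 2 from by ring, Nat.doubleFactorial_add_two,
          show 2 * (k + 1) - 1 = 2 * k + 1 from by omega]
    rw [h4]
    refine Nat.eq_of_mul_eq_mul_left (show 0 < (k + 1) * ((2 * k + 1) * (2 * k + 2)) by positivity) ?_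
    have h1 := Nat.choose_succ_right_eq (k + 1 + a) k
    have h2 := Nat.choose_succ_right_eq (2 * (k + 1 + a) + b) (2 * k + 1)
    have h3 := Nat.choose_succ_right_eq (2 * (k + 1 + a) + b) (2 * k)
    rw [show k + 1 + a - k = a + 1 from by omega] at h1
    rw [show 2 * (k + 1 + a) + b - (2 * k + 1) = 2 * a + b + 1 from by omega] at h2
    rw [show 2 * (k + 1 + a) + b - 2 * k = 2 * a + b + 2 from by omega] at h3
    rw [show 2 * k + 1 + 1 = 2 * (k + 1) from by ring] at h2
    have h5 : 2 * (a + 1) * (2 * a + 2 * b + 1) = (2 * a + b + 2) * (2 * a + b + 1) := by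
      interval_cases b <;> ring
    zify at IH h1 h2 h3 h5 ⊢
    linear_combination (((2:ℤ) * k + 1) * (2 * k + 2) * (2 * a + 2 * b + 1) *
        (∏ i ∈ Finset.Ico (k + 1 + a - k) (k + 1 + a), (2 * (i:ℤ) + 2 * (b:ℤ) + 1))) * h1 +
      (((2:ℤ) * k + 1) * (k + 1) * ((k + 1 + a).choose k : ℤ) *
        (∏ i ∈ Finset.Ico (k + 1 + a - k) (k + 1 + a), (2 * (i:ℤ) + 2 * (b:ℤ) + 1))) * h5 +
      (((2:ℤ) * k + 1) * (k + 1) * (2 * a + b + 2) * (2 * a + b + 1)) * IH -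
      (((2:ℤ) * k + 1) * (k + 1) * (2 * a + b + 1) * ((2 * k - 1)‼ : ℤ)) * h3 -
      (((2:ℤ) * k + 1) ^ 2 * (k + 1) * ((2 * k - 1)‼ : ℤ)) * h2

lemma main_aux (m b : ℕ) (hb : b ≤ 1) (x : ℝ) :
    Sbar 0 1 (-2) 0 (2 * m + b) x =
      (Real.sqrt 2) ^ (-((2 * m + b : ℕ) : ℤ)) *
        Polynomial.aeval (Real.sqrt 2 * x) (Polynomial.hermite (2 * m + b)) := by
  have hs2 : (Real.sqrt 2) ^ 2 = 2 := Real.sq_sqrt (by norm_num)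
  have hs0 : Real.sqrt 2 ≠ 0 := by positivity
  have hm : (2 * m + b) / 2 = m := by omega
  have he : (-1 : ℝ) ^ (2 * m + b + 1) = 2 * (b : ℝ) - 1 := by
    interval_cases b <;> norm_num [pow_add, pow_mul]
  simp only [Sbar, S, mul_zero, zero_add, mul_one, add_zero, hm, he]
  have hf : ∀ i : ℕ, (2 * (i : ℝ) + (2 * (b : ℝ) - 1) + 2) = ((2 * i + 2 * b + 1 : ℕ) : ℝ) := by
    intro i; push_cast; ring
  simp only [hf]
  rw [Finset.mul_sum]
  rw [Polynomial.aeval_eq_sum_range, Polynomial.natDegree_hermite, Finset.mul_sum]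
  have hsub : (Finset.range (m + 1)).image (fun k => 2 * m + b - 2 * k) ⊆
      Finset.range (2 * m + b + 1) := by
    intro j hj
    simp only [Finset.mem_image, Finset.mem_range] at *
    omega
  have hzero : ∀ j ∈ Finset.range (2 * m + b + 1),
      j ∉ (Finset.range (m + 1)).image (fun k => 2 * m + b - 2 * k) →
      (Real.sqrt 2) ^ (-((2 * m + b : ℕ) : ℤ)) *
        ((Polynomial.hermite (2 * m + b)).coeff j • (Real.sqrt 2 * x) ^ j) = 0 := by
    intro j hj hj'
    simp only [Finset.mem_range] at hj
    rcases Nat.even_or_odd (2 * m + b + j) with hpar | hpar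
    · exfalso
      obtain ⟨t, ht⟩ := hpar
      exact hj' (Finset.mem_image.mpr ⟨(2 * m + b - j) / 2,
        Finset.mem_range.mpr (by omega), by omega⟩)
    · rw [Polynomial.coeff_hermite_of_odd_add hpar]
      simp
  rw [← Finset.sum_subset hsub hzero]
  rw [Finset.sum_image (by intro a ha b' hb' h; simp only [Finset.mem_coe, Finset.mem_range] at *; omega)]
  refine Finset.sum_congr rfl ?_
  intro k hk
  simp only [Finset.mem_range] at hk
  have hk' : k ≤ m := by omega
  -- coefficient of hermite
  have hcoeff : (Polynomial.hermite (2 * m + b)).coeff (2 * m + b - 2 * k) =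
      (-1) ^ k * (((2 * k - 1)‼ * (2 * m + b).choose (2 * k) : ℕ) : ℤ) := by
    rw [← Nat.choose_symm (show 2 * k ≤ 2 * m + b by omega)]
    rw [show 2 * m + b - 2 * k = 2 * (m - k) + b from by omega]
    rw [show 2 * m + b = 2 * k + (2 * (m - k) + b) from by omega]
    rw [Polynomial.coeff_hermite_explicit]
    push_cast
    ring
  simp only [zsmul_eq_mul]
  rw [hcoeff]
  have hpow : (Real.sqrt 2) ^ (-((2 * m + b : ℕ) : ℤ)) * (Real.sqrt 2) ^ (2 * m + b - 2 * k) =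
      ((2 : ℝ) ^ k)⁻¹ := by
    rw [← zpow_natCast (Real.sqrt 2) (2 * m + b - 2 * k), ← zpow_add₀ hs0]
    rw [show (-((2 * m + b : ℕ) : ℤ) + ((2 * m + b - 2 * k : ℕ) : ℤ)) = -((2 * k : ℕ) : ℤ) from by
      push_cast; omega]
    rw [zpow_neg, zpow_natCast, pow_mul, hs2]
  have hsplit := (Finset.prod_range_mul_prod_Ico
    (fun i => ((2 * i + 2 * b + 1 : ℕ) : ℝ) / (-2)) (show m - k ≤ m by omega)).symm
  rw [hsplit]
  have hone : (∏ i ∈ Finset.range (m - k), ((2 * i + 2 * b + 1 : ℕ) : ℝ) / (-2)) *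
      (∏ i ∈ Finset.range (m - k), (-2) / ((2 * i + 2 * b + 1 : ℕ) : ℝ)) = 1 := by
    rw [← Finset.prod_mul_distrib]
    apply Finset.prod_eq_one
    intro i _
    have h0 : ((2 * i + 2 * b + 1 : ℕ) : ℝ) ≠ 0 := by positivity
    field_simp
  have hIco : (∏ i ∈ Finset.Ico (m - k) m, ((2 * i + 2 * b + 1 : ℕ) : ℝ) / (-2)) =
      (-1) ^ k * ((∏ i ∈ Finset.Ico (m - k) m, (2 * i + 2 * b + 1 : ℕ) : ℕ) : ℝ) / 2 ^ k := by
    rw [Finset.prod_div_distrib, Finset.prod_const, Nat.card_Ico,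
      show m - (m - k) = k from by omega, neg_pow]
    push_cast
    rcases Nat.even_or_odd k with h | h
    · rw [h.neg_one_pow]; ring
    · rw [h.neg_one_pow]; ring
  rw [hIco]
  have hkeyR : (Nat.choose m k : ℝ) * ((∏ i ∈ Finset.Ico (m - k) m, (2 * i + 2 * b + 1) : ℕ) : ℝ)
      = (((2 * k - 1)‼ * (2 * m + b).choose (2 * k) : ℕ) : ℝ) := by
    rw [← Nat.cast_mul, keyNat b hb m k hk']
  rw [mul_pow]
  push_cast at hkeyR hpow hone ⊢
  linear_combination ((-1 : ℝ) ^ k * x ^ (2 * m + b - 2 * k) * (m.choose k : ℝ) *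
      (∏ i ∈ Finset.Ico (m - k) m, (2 * (i : ℝ) + 2 * (b : ℝ) + 1)) / 2 ^ k) * hone +
    ((-1 : ℝ) ^ k * x ^ (2 * m + b - 2 * k) / 2 ^ k) * hkeyR -
    ((-1 : ℝ) ^ k * x ^ (2 * m + b - 2 * k) * (((2 * k - 1)‼ : ℕ) : ℝ) *
      (((2 * m + b).choose (2 * k) : ℕ) : ℝ)) * hpow

/-- The Hermite polynomials in terms of the basic class:
`S̄_n(0,1,−2,0;x) = (√2)^{−n} · He_n(√2·x)`, where `He_n` is the probabilists'
Hermite polynomial; equivalently the physicists' Hermite polynomial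
`H_n(x) = 2^{n/2}He_n(√2 x)` satisfies `H_n(x) = 2^n · S̄_n(0,1,−2,0;x)`. -/
theorem Sbar_eq_hermite (n : ℕ) (x : ℝ) :
    Sbar 0 1 (-2) 0 n x =
      (Real.sqrt 2) ^ (-(n : ℤ)) *
        Polynomial.aeval (Real.sqrt 2 * x) (Polynomial.hermite n) := by
  obtain ⟨m, b, hb, rfl⟩ : ∃ m b, b ≤ 1 ∧ n = 2 * m + b := ⟨n / 2, n % 2, by omega, by omega⟩
  exact main_aux m b hb x
end

section
/- For every real number a with a > 1/2, ∫_{−∞}^{∞} |x|^{−2a} e^{−1/x²} dx = Γ(a − 1/2), where the integrand is extended by 0 at x = 0 and Γ denotes the real Gamma function. -/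
open Real MeasureTheory Set

/-- Normalizing constant of the fourth dual symmetric distribution:
`∫_{−∞}^{∞} |x|^{−2a} e^{−1/x²} = Γ(a − 1/2)` for `a > 1/2`
(integrand extended by `0` at `x = 0`). -/
theorem integral_abs_rpow_exp_inv_sq (a : ℝ) (ha : 1 / 2 < a) :
    ∫ x : ℝ, (if x = 0 then 0 else |x| ^ (-2 * a) * Real.exp (-1 / x ^ 2)) =
      Real.Gamma (a - 1 / 2) := by
  have hfa : (fun x : ℝ => if x = 0 then (0:ℝ) else |x| ^ (-2 * a) * Real.exp (-1 / x ^ 2)) =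
      fun x : ℝ => (fun y : ℝ => if y = 0 then (0:ℝ) else y ^ (-2 * a) * Real.exp (-1 / y ^ 2)) |x| := by
    funext x
    simp [abs_eq_zero, sq_abs]
  rw [hfa, integral_comp_abs
    (f := fun y : ℝ => if y = 0 then (0:ℝ) else y ^ (-2 * a) * Real.exp (-1 / y ^ 2))]
  have key : (∫ y in Ioi (0:ℝ), (if y = 0 then (0:ℝ) else y ^ (-2 * a) * Real.exp (-1 / y ^ 2)))
      = (1/2) * Real.Gamma (a - 1/2) := by
    have h := integral_comp_rpow_Ioi
      (fun y : ℝ => (1/2 : ℝ) * (Real.exp (-y) * y ^ (a - 1/2 - 1))) (p := (-2:ℝ)) (by norm_num)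
    have heq : (∫ y in Ioi (0:ℝ), (if y = 0 then (0:ℝ) else y ^ (-2 * a) * Real.exp (-1 / y ^ 2)))
        = ∫ x in Ioi (0:ℝ), (|(-2:ℝ)| * x ^ ((-2:ℝ) - 1)) •
            ((1/2 : ℝ) * (Real.exp (-(x ^ (-2:ℝ))) * (x ^ (-2:ℝ)) ^ (a - 1/2 - 1))) := by
      refine setIntegral_congr_fun measurableSet_Ioi (fun x hx => ?_)
      have hx0 : (0:ℝ) < x := hx
      rw [if_neg hx0.ne']
      have h1 : x ^ (-2:ℝ) = (x ^ 2)⁻¹ := by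
        rw [show (-2:ℝ) = ((-2:ℤ):ℝ) from by norm_num, Real.rpow_intCast, zpow_neg]
        norm_num
      have h2 : (x ^ (-2:ℝ)) ^ (a - 1/2 - 1) = x ^ (-2*a + 3 : ℝ) := by
        rw [← Real.rpow_mul hx0.le]; ring_nf
      have h4 : x ^ ((-2:ℝ) - 1) * x ^ (-2*a + 3 : ℝ) = x ^ (-2*a : ℝ) := by
        rw [← Real.rpow_add hx0]; ring_nf
      rw [smul_eq_mul, h2, h1, show |(-2:ℝ)| = 2 from by norm_num,
        show (-1 / x ^ 2 : ℝ) = -(x ^ 2)⁻¹ from by ring, ← h4]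
      ring
    rw [heq, h, Real.Gamma_eq_integral (by linarith), ← integral_const_mul]
  rw [key]; ring
end

section
/- For all real numbers a, b with a < 1/2 and a + b > 1/2, ∫_{−∞}^{∞} |x|^{−2a} (1 + x²)^{−b} dx = Γ(b + a − 1/2) · Γ(1/2 − a) / Γ(b), where Γ denotes the real Gamma function. -/
open Real MeasureTheory Set

lemma real_betaIntegral_aux (u v : ℝ) (hu : 0 < u) (hv : 0 < v) :
    ∫ x in (0:ℝ)..1, x ^ (u - 1) * (1 - x) ^ (v - 1) =
      Real.Gamma u * Real.Gamma v / Real.Gamma (u + v) := by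
  have h := Complex.Gamma_mul_Gamma_eq_betaIntegral (s := (u : ℂ)) (t := (v : ℂ))
    (by simpa using hu) (by simpa using hv)
  rw [Complex.betaIntegral] at h
  have hc : (∫ x : ℝ in (0:ℝ)..1, (x : ℂ) ^ ((u : ℂ) - 1) * (1 - (x : ℂ)) ^ ((v : ℂ) - 1)) =
      ((∫ x in (0:ℝ)..1, x ^ (u - 1) * (1 - x) ^ (v - 1) : ℝ) : ℂ) := by
    rw [← intervalIntegral.integral_ofReal]
    refine intervalIntegral.integral_congr fun x hx => ?_
    rw [uIcc_of_le zero_le_one] at hx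
    rw [Complex.ofReal_mul, Complex.ofReal_cpow hx.1 (u - 1),
      Complex.ofReal_cpow (by linarith [hx.2] : (0:ℝ) ≤ 1 - x) (v - 1)]
    push_cast
    ring
  rw [hc] at h
  have hG : Complex.Gamma ((u : ℂ) + v) ≠ 0 :=
    Complex.Gamma_ne_zero_of_re_pos (by simp [add_pos hu hv])
  have : ((Real.Gamma u * Real.Gamma v / Real.Gamma (u + v) : ℝ) : ℂ) =
      ((∫ x in (0:ℝ)..1, x ^ (u - 1) * (1 - x) ^ (v - 1) : ℝ) : ℂ) := by
    push_cast
    rw [← Complex.Gamma_ofReal, ← Complex.Gamma_ofReal, ← Complex.Gamma_ofReal]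
    push_cast
    field_simp [hG] at h ⊢
    rw [h]
  exact_mod_cast this.symm

lemma beta_Ioi_aux (u v : ℝ) (hu : 0 < u) (hv : 0 < v) :
    ∫ t in Ioi (0:ℝ), t ^ (u - 1) * (1 + t) ^ (-(u + v)) =
      Real.Gamma u * Real.Gamma v / Real.Gamma (u + v) := by
  set φ : ℝ → ℝ := fun s => s / (1 - s) with hφ
  have himg : φ '' Ioo 0 1 = Ioi (0:ℝ) := by
    ext t
    simp only [mem_image, mem_Ioo, mem_Ioi, hφ]
    constructor
    · rintro ⟨s, ⟨hs0, hs1⟩, rfl⟩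
      exact div_pos hs0 (by linarith)
    · intro ht
      refine ⟨t / (1 + t), ⟨div_pos ht (by linarith), ?_⟩, ?_⟩
      · rw [div_lt_one (by linarith)]; linarith
      · have h1t : (0:ℝ) < 1 + t := by linarith
        field_simp
        ring
  have hderiv : ∀ s ∈ Ioo (0:ℝ) 1, HasDerivWithinAt φ ((1 - s) ^ (-2 : ℝ)) (Ioo 0 1) s := by
    intro s hs
    have hs1 : (1 : ℝ) - s ≠ 0 := ne_of_gt (by linarith [hs.2])
    have : HasDerivAt φ ((1 * (1 - s) - s * (-1)) / (1 - s) ^ 2) s := by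
      exact (hasDerivAt_id s).div ((hasDerivAt_id s).const_sub 1) (by simpa using hs1)
    refine this.hasDerivWithinAt.congr_deriv ?_
    have h1s : (0:ℝ) < 1 - s := by have := hs.2; linarith
    rw [rpow_neg h1s.le, show ((2:ℝ)) = ((2:ℕ):ℝ) by norm_num, rpow_natCast]
    field_simp
    ring
  have hinj : InjOn φ (Ioo 0 1) := by
    intro x hx y hy hxy
    have hx1 : (1:ℝ) - x > 0 := by have := hx.2; linarith
    have hy1 : (1:ℝ) - y > 0 := by have := hy.2; linarith
    simp only [hφ] at hxy
    field_simp at hxy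
    nlinarith [hxy]
  have key := integral_image_eq_integral_abs_deriv_smul measurableSet_Ioo hderiv hinj
    (fun t => t ^ (u - 1) * (1 + t) ^ (-(u + v)))
  rw [himg] at key
  rw [key]
  have heq : ∀ s ∈ Ioo (0:ℝ) 1,
      |(1 - s) ^ (-2 : ℝ)| • (φ s ^ (u - 1) * (1 + φ s) ^ (-(u + v))) =
      s ^ (u - 1) * (1 - s) ^ (v - 1) := by
    intro s hs
    have hs0 : (0:ℝ) < s := hs.1
    have h1s : (0:ℝ) < 1 - s := by have := hs.2; linarith
    have h1 : 1 + φ s = 1 / (1 - s) := by simp only [hφ]; field_simp; ring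
    have h2 : φ s ^ (u - 1) = s ^ (u - 1) * (1 - s) ^ (-(u - 1)) := by
      rw [hφ]; simp only
      rw [div_rpow hs0.le h1s.le, rpow_neg h1s.le, div_eq_mul_inv]
    have h3 : (1 + φ s) ^ (-(u + v)) = (1 - s) ^ (u + v) := by
      rw [h1, one_div, inv_rpow h1s.le, ← rpow_neg h1s.le, neg_neg]
    rw [smul_eq_mul, abs_of_nonneg (rpow_nonneg h1s.le _), h2, h3]
    rw [show ((1 - s) ^ (-2:ℝ) * (s ^ (u - 1) * (1 - s) ^ (-(u - 1)) * (1 - s) ^ (u + v)))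
        = s ^ (u - 1) * ((1 - s) ^ (-2:ℝ) * (1 - s) ^ (-(u - 1)) * (1 - s) ^ (u + v)) by ring]
    rw [← rpow_add h1s, ← rpow_add h1s]
    congr 1
    ring_nf
  rw [setIntegral_congr_fun measurableSet_Ioo heq, ← real_betaIntegral_aux u v hu hv,
    intervalIntegral.integral_of_le zero_le_one, ← integral_Ioc_eq_integral_Ioo]

/-- Normalizing constant of the third dual symmetric distribution:
`∫_{−∞}^{∞} |x|^{−2a} (1+x²)^{−b} dx = Γ(b+a−1/2)Γ(1/2−a)/Γ(b)`
for `a < 1/2` and `a + b > 1/2`. -/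
theorem integral_abs_rpow_one_add_sq_rpow (a b : ℝ) (ha : a < 1 / 2) (hab : 1 / 2 < a + b) :
    ∫ x : ℝ, |x| ^ (-2 * a) * (1 + x ^ 2) ^ (-b) =
      Real.Gamma (b + a - 1 / 2) * Real.Gamma (1 / 2 - a) / Real.Gamma b := by
  have step1 : (∫ x : ℝ, |x| ^ (-2 * a) * (1 + x ^ 2) ^ (-b)) =
      2 * ∫ x in Ioi (0:ℝ), x ^ (-2 * a) * (1 + x ^ 2) ^ (-b) := by
    rw [← integral_comp_abs (f := fun x => x ^ (-2 * a) * (1 + x ^ 2) ^ (-b))]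
    congr 1
    ext x
    rw [sq_abs]
  have step2 : (∫ x in Ioi (0:ℝ), (2 * x ^ ((2:ℝ) - 1)) •
        ((fun t => (1/2) * (t ^ (-a - 1/2) * (1 + t) ^ (-b))) (x ^ (2:ℝ)))) =
      ∫ t in Ioi (0:ℝ), (1/2) * (t ^ (-a - 1/2) * (1 + t) ^ (-b)) :=
    integral_comp_rpow_Ioi_of_pos (g := fun t => (1/2) * (t ^ (-a - 1/2) * (1 + t) ^ (-b))) (p := 2) (by norm_num)
  have step3 : ∀ x ∈ Ioi (0:ℝ), (2 * x ^ ((2:ℝ) - 1)) •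
        ((fun t => (1/2) * (t ^ (-a - 1/2) * (1 + t) ^ (-b))) (x ^ (2:ℝ))) =
      x ^ (-2 * a) * (1 + x ^ 2) ^ (-b) := by
    intro x hx
    have hx0 : (0:ℝ) < x := hx
    simp only [smul_eq_mul]
    rw [← rpow_natCast x 2, show ((2:ℕ):ℝ) = (2:ℝ) by norm_num] at *
    rw [← rpow_mul hx0.le]
    rw [show (2:ℝ) * (-a - 1/2) = -2*a - 1 by ring]
    rw [show (2:ℝ) - 1 = 1 by norm_num, rpow_one]
    have hmul : x * x ^ (-2*a - 1) = x ^ (-2*a) := by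
      nth_rewrite 1 [← rpow_one x]
      rw [← rpow_add hx0]
      norm_num
    rw [← hmul]
    ring
  rw [step1, ← setIntegral_congr_fun measurableSet_Ioi step3, step2]
  rw [show (2:ℝ) * ∫ t in Ioi (0:ℝ), (1/2) * (t ^ (-a - 1/2) * (1 + t) ^ (-b))
      = ∫ t in Ioi (0:ℝ), t ^ (-a - 1/2) * (1 + t) ^ (-b) by
    rw [integral_const_mul]; ring]
  have := beta_Ioi_aux (1/2 - a) (b + a - 1/2) (by linarith) (by linarith)
  rw [show (1/2 - a) - 1 = -a - 1/2 by ring, show (1/2 - a) + (b + a - 1/2) = b by ring] at this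
  rw [this]
  ring
end
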